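/- The characteristic polynomial of the 6×6 matrix M of the externally coupled Pais–Uhlenbeck system equals χ(λ) = (ω₀²+λ²)(ω₁²+λ²)(ω₂²+λ²) + γλ², where γ = ĝ²(ω₂²−ω₁²)/m. -/

import Mathlib

set_option maxHeartbeats 2000000
set_option maxRecDepth 8000


/-- The characteristic determinant of the 6×6 matrix of the externally coupled
Pais–Uhlenbeck system equals
`(ω₀²+λ²)(ω₁²+λ²)(ω₂²+λ²) + γλ²` with `γ = ĝ²(ω₂²−ω₁²)/m`. -/
theorem coupled_PU_characteristic_determinant (ω0 ω1 ω2 g m : ℝ) (hm : m ≠ 0) :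
    ∀ lam : ℝ,
      Matrix.det
        ((!![0, 0, -g, 1, 0, 0;
             0, 0, -g, 0, -1, 0;
             0, 0, 0, 0, 0, 1/m;
             -ω1^2, 0, 0, 0, 0, 0;
             0, ω2^2, 0, 0, 0, 0;
             0, 0, -m*ω0^2, g, g, 0] : Matrix (Fin 6) (Fin 6) ℝ)
          - lam • (1 : Matrix (Fin 6) (Fin 6) ℝ))
      = (ω0^2 + lam^2) * (ω1^2 + lam^2) * (ω2^2 + lam^2)
        + (g^2 * (ω2^2 - ω1^2) / m) * lam^2 := by
  intro lam
  simp [Matrix.det_succ_row_zero, Fin.sum_univ_succ, Matrix.sub_apply, Matrix.smul_apply,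
    Matrix.one_apply, Fin.succAbove, Fin.castSucc, Fin.castAdd, Fin.castLE]
  field_simp
  ring
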